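/- Let X and X' be Banach spaces, A† : X → X' and A : X' → X bounded linear operators with A injective, and F : X → X' Fréchet differentiable at a point ā ∈ X with A∘F mapping X to X. Suppose there are nonnegative constants Y₀, Z₀, Z₁ and a function Z₂ : (0,∞) → (0,∞) such that ‖A F(ā)‖ ≤ Y₀, ‖I − A A†‖ ≤ Z₀, ‖A(A† − DF(ā))‖ ≤ Z₁, and ‖A(DF(c) − DF(ā))‖ ≤ Z₂(r)·r for all c in the closed ball of radius r around ā. If there exists r₀ > 0 with Z₂(r₀)r₀² − (1 − Z₁ − Z₀)r₀ + Y₀ < 0, then there exists a unique ã in the closed ball of radius r₀ around ā with F(ã) = 0. -/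

import Mathlib

open Metric

/-- Newton-Kantorovich type theorem (radii polynomial approach). -/
theorem newton_kantorovich
    {X X' : Type*} [NormedAddCommGroup X] [NormedSpace ℝ X] [CompleteSpace X]
    [NormedAddCommGroup X'] [NormedSpace ℝ X']
    (Adag : X →L[ℝ] X') (A : X' →L[ℝ] X) (hA : Function.Injective A)
    (F : X → X') (DF : X → (X →L[ℝ] X')) (abar : X)
    (hFderiv : ∀ x : X, HasFDerivAt F (DF x) x)
    (Y₀ Z₀ Z₁ : ℝ) (Z₂ : ℝ → ℝ)
    (hY₀ : 0 ≤ Y₀) (hZ₀ : 0 ≤ Z₀) (hZ₁ : 0 ≤ Z₁) (hZ₂pos : ∀ r > (0:ℝ), 0 < Z₂ r)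
    (hY : ‖A (F abar)‖ ≤ Y₀)
    (hZ0 : ‖ContinuousLinearMap.id ℝ X - A.comp Adag‖ ≤ Z₀)
    (hZ1 : ‖A.comp (Adag - DF abar)‖ ≤ Z₁)
    (hZ2 : ∀ r > (0:ℝ), ∀ c ∈ closedBall abar r, ‖A.comp (DF c - DF abar)‖ ≤ Z₂ r * r)
    (r₀ : ℝ) (hr₀ : 0 < r₀)
    (hp : Z₂ r₀ * r₀ ^ 2 - (1 - Z₁ - Z₀) * r₀ + Y₀ < 0) :
    ∃! atil : X, atil ∈ closedBall abar r₀ ∧ F atil = 0 := by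
  set κ : ℝ := Z₀ + Z₁ + Z₂ r₀ * r₀ with hκdef
  have hZ₂r : 0 < Z₂ r₀ := hZ₂pos r₀ hr₀
  have hκ0 : 0 ≤ κ := by positivity
  have hκr : κ * r₀ + Y₀ < r₀ := by nlinarith [sq_nonneg r₀]
  have hκ1 : κ < 1 := by nlinarith
  set T : X → X := fun x => x - A (F x) with hT
  have hTderiv : ∀ x : X, HasFDerivAt T (ContinuousLinearMap.id ℝ X - A.comp (DF x)) x := by
    intro x
    exact (hasFDerivAt_id x).sub (A.hasFDerivAt.comp x (hFderiv x))
  set s : Set X := closedBall abar r₀ with hs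
  have hbound : ∀ c ∈ s, ‖ContinuousLinearMap.id ℝ X - A.comp (DF c)‖ ≤ κ := by
    intro c hc
    have key : ContinuousLinearMap.id ℝ X - A.comp (DF c) =
        (ContinuousLinearMap.id ℝ X - A.comp Adag) + A.comp (Adag - DF abar)
          + (A.comp (DF abar - DF c)) := by
      simp only [ContinuousLinearMap.comp_sub]
      abel
    rw [key]
    have h3 : ‖A.comp (DF abar - DF c)‖ ≤ Z₂ r₀ * r₀ := by
      rw [show DF abar - DF c = -(DF c - DF abar) by abel, ContinuousLinearMap.comp_neg,
        norm_neg]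
      exact hZ2 r₀ hr₀ c hc
    calc ‖(ContinuousLinearMap.id ℝ X - A.comp Adag) + A.comp (Adag - DF abar)
          + (A.comp (DF abar - DF c))‖
        ≤ ‖(ContinuousLinearMap.id ℝ X - A.comp Adag) + A.comp (Adag - DF abar)‖
            + ‖A.comp (DF abar - DF c)‖ := norm_add_le _ _
      _ ≤ ‖ContinuousLinearMap.id ℝ X - A.comp Adag‖ + ‖A.comp (Adag - DF abar)‖
            + ‖A.comp (DF abar - DF c)‖ := by gcongr; exact norm_add_le _ _
      _ ≤ Z₀ + Z₁ + Z₂ r₀ * r₀ := by gcongr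
  have hlip : ∀ x ∈ s, ∀ y ∈ s, ‖T y - T x‖ ≤ κ * ‖y - x‖ := by
    intro x hx y hy
    exact (convex_closedBall abar r₀).norm_image_sub_le_of_norm_hasFDerivWithin_le
      (fun z hz => (hTderiv z).hasFDerivWithinAt) hbound hx hy
  have hTmaps : Set.MapsTo T s s := by
    intro x hx
    have h1 : ‖T x - T abar‖ ≤ κ * ‖x - abar‖ :=
      hlip abar (mem_closedBall_self hr₀.le) x hx
    have h2 : ‖T abar - abar‖ ≤ Y₀ := by
      simp only [hT]
      simpa using hY
    have hxr : ‖x - abar‖ ≤ r₀ := by rwa [← dist_eq_norm, ← mem_closedBall]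
    have : ‖T x - abar‖ ≤ κ * r₀ + Y₀ := by
      calc ‖T x - abar‖ ≤ ‖T x - T abar‖ + ‖T abar - abar‖ := norm_sub_le_norm_sub_add_norm_sub _ _ _
        _ ≤ κ * r₀ + Y₀ := by
            have := mul_le_mul_of_nonneg_left hxr hκ0
            linarith
    simp only [hs, mem_closedBall, dist_eq_norm]
    linarith
  -- contraction on the complete set s
  have hsc : IsComplete s := (isClosed_closedBall).isComplete
  have hlipOn : LipschitzOnWith κ.toNNReal T s := by
    rw [lipschitzOnWith_iff_norm_sub_le]
    intro x hx y hy
    simpa [Real.coe_toNNReal κ hκ0] using hlip y hy x hx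
  have hcontr : ContractingWith κ.toNNReal (hTmaps.restrict T s s) := by
    constructor
    · exact_mod_cast (Real.toNNReal_lt_one).2 hκ1
    · exact hlipOn.mapsToRestrict hTmaps
  obtain ⟨y, hys, hyfix, -, -⟩ := hcontr.exists_fixedPoint' hsc hTmaps
    (mem_closedBall_self hr₀.le) (edist_ne_top _ _)
  have fixed_iff : ∀ z : X, T z = z ↔ F z = 0 := by
    intro z
    constructor
    · intro h
      have h' : z - A (F z) = z := h
      have hz : A (F z) = A 0 := by
        have : A (F z) = 0 := by
          have := sub_eq_iff_eq_add.mp h'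
          simpa using this
        simpa using this
      exact hA hz
    · intro h; simp [hT, h]
  refine ⟨y, ⟨hys, (fixed_iff y).1 hyfix⟩, ?_⟩
  rintro z ⟨hzs, hz0⟩
  have hzfix : T z = z := (fixed_iff z).2 hz0
  have : ‖z - y‖ ≤ κ * ‖z - y‖ := by
    calc ‖z - y‖ = ‖T z - T y‖ := by rw [hzfix, hyfix]
      _ ≤ κ * ‖z - y‖ := hlip y hys z hzs
  have hzy : ‖z - y‖ = 0 := by nlinarith [norm_nonneg (z - y)]
  exact sub_eq_zero.mp (norm_eq_zero.mp hzy)
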